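/- arXiv:2310.00589 — 3 statements merged into one kernel-verified Lean document; each statement's English description precedes it below -/
import Mathlib

section
/- Every index set Λ whose pattern subspace B_Λ generates se(n) as a Lie algebra satisfies |Λ| ≥ n, and this bound is attained: there exists an index set Λ with |Λ| = n such that B_Λ generates se(n) as a Lie algebra. Moreover, any Λ attaining the bound consists of exactly n−1 pairs (i,j) with j ≤ n, whose edges form a spanning tree of {1,...,n}, together with exactly one pair of the form (k,n+1). -/
open Matrix

/-!
Common setup: real (n+1)×(n+1) matrices (rows/columns indexed by `Fin (n+1)`,
where index `i : Fin n` cast via `Fin.castSucc` plays the role of `i ∈ {1,…,n}`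
and `Fin.last n` plays the role of the index `n+1`), the Lie bracket
`⁅A,B⁆ = A*B - B*A`, the matrices `Ω̃_{ij}` and `E_{k,n+1}`, the Lie algebra
`se(n)`, index sets `Λ`, pattern subspaces `B_Λ`, graphs with solid/broken
edges, the one-step transitive closure, and derived distributions.
-/

/-- The ambient space of real (n+1)×(n+1) matrices. -/
abbrev Mat (n : ℕ) := Matrix (Fin (n + 1)) (Fin (n + 1)) ℝ

/-- `Ω̃_{ij}`: 1 in entry (i,j), −1 in entry (j,i), 0 elsewhere (indices among 1,…,n). -/
def Omega {n : ℕ} (i j : Fin n) : Mat n :=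
  Matrix.single i.castSucc j.castSucc 1 - Matrix.single j.castSucc i.castSucc 1

/-- `E_{k,n+1}`: 1 in entry (k, n+1), 0 elsewhere. -/
def Ecol {n : ℕ} (k : Fin n) : Mat n :=
  Matrix.single k.castSucc (Fin.last n) 1

/-- The set se(n): matrices whose (n+1)-th row is zero and with
`M(i,j) = −M(j,i)` for all 1 ≤ i,j ≤ n. -/
def seSet (n : ℕ) : Set (Mat n) :=
  {M | (∀ j, M (Fin.last n) j = 0) ∧
    ∀ i j : Fin n, M i.castSucc j.castSucc = - M j.castSucc i.castSucc}

/-- se(n) as a real subspace of the (n+1)×(n+1) matrices. -/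
def seL (n : ℕ) : Submodule ℝ (Mat n) where
  carrier := seSet n
  add_mem' := by
    rintro a b ⟨ha1, ha2⟩ ⟨hb1, hb2⟩
    refine ⟨fun j => ?_, fun i j => ?_⟩
    · simp [Matrix.add_apply, ha1 j, hb1 j]
    · simp only [Matrix.add_apply, ha2 i j, hb2 i j]; ring
  zero_mem' := by
    refine ⟨fun j => ?_, fun i j => ?_⟩ <;> simp
  smul_mem' := by
    rintro c a ⟨ha1, ha2⟩
    refine ⟨fun j => ?_, fun i j => ?_⟩
    · simp [Matrix.smul_apply, ha1 j]
    · simp only [Matrix.smul_apply, ha2 i j, smul_neg]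

/-- Kronecker delta (real-valued). -/
def kron {n : ℕ} (p q : Fin n) : ℝ := if p = q then 1 else 0

/-- An index set Λ: a set of pairs (p,q) with p < q, i.e. a subset of
`{(i,j) : 1 ≤ i < j ≤ n} ∪ {(k, n+1) : 1 ≤ k ≤ n}`. -/
def IndexSet {n : ℕ} (Λ : Set (Fin (n + 1) × Fin (n + 1))) : Prop :=
  ∀ e ∈ Λ, e.1 < e.2

/-- The generating set `{Ω̃_{ij} : (i,j) ∈ Λ, j ≤ n} ∪ {E_{k,n+1} : (k,n+1) ∈ Λ}`. -/
def genSet {n : ℕ} (Λ : Set (Fin (n + 1) × Fin (n + 1))) : Set (Mat n) :=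
  {M | (∃ i j : Fin n, (i.castSucc, j.castSucc) ∈ Λ ∧ M = Omega i j) ∨
    (∃ k : Fin n, (k.castSucc, Fin.last n) ∈ Λ ∧ M = Ecol k)}

/-- The pattern subspace `B_Λ`. -/
def BLam {n : ℕ} (Λ : Set (Fin (n + 1) × Fin (n + 1))) : Submodule ℝ (Mat n) :=
  Submodule.span ℝ (genSet Λ)

attribute [local instance 100] LieRing.ofAssociativeRing LieAlgebra.ofAssociativeAlgebra

/-- `B_Λ` generates `se(n)` as a Lie algebra: the smallest real subspace containing
`B_Λ` and closed under the bracket (i.e. the Lie subalgebra generated by `B_Λ`)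
equals `se(n)`. -/
def GeneratesSE (n : ℕ) (Λ : Set (Fin (n + 1) × Fin (n + 1))) : Prop :=
  (LieSubalgebra.lieSpan ℝ (Mat n) (BLam Λ : Set (Mat n)) : Set (Mat n)) = seSet n

/-- A graph on vertices {1,…,n+1} recorded by its solid and broken adjacency relations. -/
structure SBGraph (n : ℕ) where
  solid : Fin (n + 1) → Fin (n + 1) → Prop
  broken : Fin (n + 1) → Fin (n + 1) → Prop

/-- A well-formed solid/broken graph: simple and symmetric; solid edges have both
endpoints among 1,…,n, broken edges have one endpoint equal to n+1. -/
def SBGraph.Good {n : ℕ} (G : SBGraph n) : Prop :=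
  (∀ p q, G.solid p q → G.solid q p) ∧ (∀ p q, G.solid p q → p ≠ q) ∧
  (∀ p q, G.solid p q → p ≠ Fin.last n ∧ q ≠ Fin.last n) ∧
  (∀ p q, G.broken p q → G.broken q p) ∧ (∀ p q, G.broken p q → p ≠ q) ∧
  (∀ p q, G.broken p q → p = Fin.last n ∨ q = Fin.last n)

/-- The one-step closure: for distinct vertices i,j,k, add a solid edge {i,k} whenever
{i,j} and {j,k} are both solid, and a broken edge {i,k} whenever one of {i,j},{j,k} is
solid and the other is broken (nothing is added when both are broken). -/
def SBGraph.step {n : ℕ} (G : SBGraph n) : SBGraph n where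
  solid := fun i k => G.solid i k ∨
    (∃ j, i ≠ j ∧ j ≠ k ∧ i ≠ k ∧ G.solid i j ∧ G.solid j k)
  broken := fun i k => G.broken i k ∨
    (∃ j, i ≠ j ∧ j ≠ k ∧ i ≠ k ∧
      ((G.solid i j ∧ G.broken j k) ∨ (G.broken i j ∧ G.solid j k)))

/-- The l-th transitive closure `G^{(l)}`. -/
def SBGraph.closure {n : ℕ} (G : SBGraph n) (l : ℕ) : SBGraph n :=
  (fun H => SBGraph.step H)^[l] G

/-- `G` is the complete graph on the n+1 vertices: every pair of distinct vertices
is joined by a (solid or broken) edge. -/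
def SBGraph.IsComplete {n : ℕ} (G : SBGraph n) : Prop :=
  ∀ p q : Fin (n + 1), p ≠ q → G.solid p q ∨ G.broken p q

/-- The graph `G(B_Λ)` associated with a pattern: solid edges {i,j} for (i,j) ∈ Λ with
j ≤ n, broken edges {k,n+1} for (k,n+1) ∈ Λ. -/
def patternGraph {n : ℕ} (Λ : Set (Fin (n + 1) × Fin (n + 1))) : SBGraph n where
  solid := fun p q => ∃ i j : Fin n, (i.castSucc, j.castSucc) ∈ Λ ∧
    ((p = i.castSucc ∧ q = j.castSucc) ∨ (p = j.castSucc ∧ q = i.castSucc))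
  broken := fun p q => ∃ k : Fin n, (k.castSucc, Fin.last n) ∈ Λ ∧
    ((p = k.castSucc ∧ q = Fin.last n) ∨ (p = Fin.last n ∧ q = k.castSucc))

/-- One step of the derived-distribution construction:
`D ↦ D + span{[A₁,A₂] : A₁,A₂ ∈ D}`. -/
def derivedStep {n : ℕ} (D : Submodule ℝ (Mat n)) : Submodule ℝ (Mat n) :=
  D ⊔ Submodule.span ℝ {M | ∃ A B, A ∈ D ∧ B ∈ D ∧ M = A * B - B * A}

/-- The i-th derived distribution `D^{(i)}`. -/
def derivedIter {n : ℕ} (D : Submodule ℝ (Mat n)) (i : ℕ) : Submodule ℝ (Mat n) :=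
  (fun S => derivedStep S)^[i] D

namespace Stmt12Aux

open Matrix

variable {n : ℕ}

lemma cs_ne_last (i : Fin n) : i.castSucc ≠ Fin.last n := (Fin.castSucc_lt_last i).ne

lemma omega_apply (i j : Fin n) (p q : Fin (n+1)) :
    Omega i j p q = (if i.castSucc = p ∧ j.castSucc = q then (1:ℝ) else 0)
      - (if j.castSucc = p ∧ i.castSucc = q then (1:ℝ) else 0) := by
  simp [Omega, Matrix.sub_apply, Matrix.single, Matrix.of_apply]

lemma ecol_apply (k : Fin n) (p q : Fin (n+1)) :
    Ecol k p q = (if k.castSucc = p ∧ Fin.last n = q then (1:ℝ) else 0) := by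
  simp [Ecol, Matrix.single, Matrix.of_apply]

lemma omega_mem_se (i j : Fin n) : Omega i j ∈ seSet n := by
  constructor
  · intro q
    simp [omega_apply, cs_ne_last i, cs_ne_last j]
  · intro a b
    rw [omega_apply, omega_apply]
    by_cases h1 : i.castSucc = a.castSucc ∧ j.castSucc = b.castSucc <;>
    by_cases h2 : j.castSucc = a.castSucc ∧ i.castSucc = b.castSucc <;>
    simp [h1, h2, and_comm]

lemma ecol_mem_se (k : Fin n) : Ecol k ∈ seSet n := by
  constructor
  · intro q
    simp [ecol_apply, cs_ne_last k]
  · intro a b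
    simp [ecol_apply, (cs_ne_last b).symm, (cs_ne_last a).symm]

lemma genSet_subset_se (Λ : Set (Fin (n+1) × Fin (n+1))) : genSet Λ ⊆ seSet n := by
  rintro M (⟨i, j, _, rfl⟩ | ⟨k, _, rfl⟩)
  · exact omega_mem_se i j
  · exact ecol_mem_se k

lemma mul_apply_cs (A B : Mat n) (hB : ∀ q, B (Fin.last n) q = 0) (p : Fin (n+1)) (j : Fin n) :
    (A * B) p j.castSucc = ∑ m : Fin n, A p m.castSucc * B m.castSucc j.castSucc := by
  rw [Matrix.mul_apply, Fin.sum_univ_castSucc]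
  simp [hB]

/-- se(n) as a Lie subalgebra. -/
def seAlg (n : ℕ) : LieSubalgebra ℝ (Mat n) :=
  { seL n with
    lie_mem' := by
      rintro x y ⟨hx1, hx2⟩ ⟨hy1, hy2⟩
      rw [Ring.lie_def]
      constructor
      · intro q
        simp [Matrix.sub_apply, Matrix.mul_apply, hx1, hy1]
      · intro i j
        simp only [Matrix.sub_apply]
        rw [mul_apply_cs x y hy1, mul_apply_cs y x hx1, mul_apply_cs x y hy1,
          mul_apply_cs y x hx1, ← Finset.sum_sub_distrib, ← Finset.sum_sub_distrib, ← Finset.sum_neg_distrib]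
        refine Finset.sum_congr rfl fun m _ => ?_
        rw [hx2 i m, hy2 m j, hy2 i m, hx2 m j]
        ring }

lemma mem_seAlg {M : Mat n} : M ∈ seAlg n ↔ M ∈ seSet n := Iff.rfl

/-- Block subalgebra for a vertex subset S of all n+1 indices. -/
def blockAlg (n : ℕ) (S : Set (Fin (n+1))) : LieSubalgebra ℝ (Mat n) where
  carrier := {M | ∀ a b, a ∈ S → b ∉ S → M a b = 0 ∧ M b a = 0}
  add_mem' := by
    intro x y hx hy a b ha hb
    have h1 := hx a b ha hb; have h2 := hy a b ha hb
    constructor <;> simp [Matrix.add_apply, h1.1, h1.2, h2.1, h2.2]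
  zero_mem' := by intro a b _ _; simp
  smul_mem' := by
    intro c x hx a b ha hb
    have h1 := hx a b ha hb
    constructor <;> simp [Matrix.smul_apply, h1.1, h1.2]
  lie_mem' := by
    intro x y hx hy a b ha hb
    rw [Ring.lie_def]
    have key : ∀ P Q : Mat n, (∀ a b, a ∈ S → b ∉ S → P a b = 0 ∧ P b a = 0) →
        (∀ a b, a ∈ S → b ∉ S → Q a b = 0 ∧ Q b a = 0) →
        ∀ u v, u ∈ S → v ∉ S → (P * Q) u v = 0 ∧ (P * Q) v u = 0 := by
      intro P Q hP hQ u v hu hv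
      constructor <;> rw [Matrix.mul_apply] <;> refine Finset.sum_eq_zero fun k _ => ?_ <;>
        by_cases hk : k ∈ S
      · rw [(hQ k v hk hv).1, mul_zero]
      · rw [(hP u k hu hk).1, zero_mul]
      · rw [(hP k v hk hv).2, zero_mul]
      · rw [(hQ u k hu hk).2, mul_zero]
    have k1 := key x y hx hy a b ha hb
    have k2 := key y x hy hx a b ha hb
    constructor <;> simp [Matrix.sub_apply, k1.1, k1.2, k2.1, k2.2]

/-- Matrices with last row and last column zero. -/
def lastZeroAlg (n : ℕ) : LieSubalgebra ℝ (Mat n) where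
  carrier := {M | ∀ p, M p (Fin.last n) = 0 ∧ M (Fin.last n) p = 0}
  add_mem' := by
    intro x y hx hy p
    constructor <;> simp [Matrix.add_apply, (hx p).1, (hx p).2, (hy p).1, (hy p).2]
  zero_mem' := by intro p; simp
  smul_mem' := by
    intro c x hx p
    constructor <;> simp [Matrix.smul_apply, (hx p).1, (hx p).2]
  lie_mem' := by
    intro x y hx hy p
    rw [Ring.lie_def]
    have key : ∀ P Q : Mat n, (∀ p, P p (Fin.last n) = 0 ∧ P (Fin.last n) p = 0) →
        (∀ p, Q p (Fin.last n) = 0 ∧ Q (Fin.last n) p = 0) →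
        (P * Q) p (Fin.last n) = 0 ∧ (P * Q) (Fin.last n) p = 0 := by
      intro P Q hP hQ
      constructor <;> rw [Matrix.mul_apply] <;> refine Finset.sum_eq_zero fun k _ => ?_
      · rw [(hQ k).1, mul_zero]
      · rw [(hP k).2, zero_mul]
    have k1 := key x y hx hy
    have k2 := key y x hy hx
    constructor <;> simp [Matrix.sub_apply, k1.1, k1.2, k2.1, k2.2]

/-- Last row zero and block structure on the top-left n×n block w.r.t. S ⊆ Fin n. -/
def crossAlg (n : ℕ) (S : Set (Fin n)) : LieSubalgebra ℝ (Mat n) where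
  carrier := {M | (∀ q, M (Fin.last n) q = 0) ∧
    ∀ i j : Fin n, i ∈ S → j ∉ S → M i.castSucc j.castSucc = 0 ∧ M j.castSucc i.castSucc = 0}
  add_mem' := by
    rintro x y ⟨hx1, hx2⟩ ⟨hy1, hy2⟩
    refine ⟨fun q => ?_, fun i j hi hj => ?_⟩
    · simp [Matrix.add_apply, hx1 q, hy1 q]
    · have h1 := hx2 i j hi hj; have h2 := hy2 i j hi hj
      constructor <;> simp [Matrix.add_apply, h1.1, h1.2, h2.1, h2.2]
  zero_mem' := by exact ⟨fun q => rfl, fun i j _ _ => ⟨rfl, rfl⟩⟩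
  smul_mem' := by
    rintro c x ⟨hx1, hx2⟩
    refine ⟨fun q => ?_, fun i j hi hj => ?_⟩
    · simp [Matrix.smul_apply, hx1 q]
    · have h1 := hx2 i j hi hj
      constructor <;> simp [Matrix.smul_apply, h1.1, h1.2]
  lie_mem' := by
    rintro x y ⟨hx1, hx2⟩ ⟨hy1, hy2⟩
    rw [Ring.lie_def]
    have key : ∀ P Q : Mat n, (∀ q, P (Fin.last n) q = 0) → (∀ q, Q (Fin.last n) q = 0) →
        (∀ i j : Fin n, i ∈ S → j ∉ S →
          P i.castSucc j.castSucc = 0 ∧ P j.castSucc i.castSucc = 0) →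
        (∀ i j : Fin n, i ∈ S → j ∉ S →
          Q i.castSucc j.castSucc = 0 ∧ Q j.castSucc i.castSucc = 0) →
        (∀ q, (P * Q) (Fin.last n) q = 0) ∧
        ∀ i j : Fin n, i ∈ S → j ∉ S →
          (P * Q) i.castSucc j.castSucc = 0 ∧ (P * Q) j.castSucc i.castSucc = 0 := by
      intro P Q hP1 hQ1 hP2 hQ2
      constructor
      · intro q
        rw [Matrix.mul_apply]
        exact Finset.sum_eq_zero fun k _ => by rw [hP1 k, zero_mul]
      · intro i j hi hj
        constructor <;> rw [mul_apply_cs P Q hQ1] <;>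
          refine Finset.sum_eq_zero fun m _ => ?_ <;> by_cases hm : m ∈ S
        · rw [(hQ2 m j hm hj).1, mul_zero]
        · rw [(hP2 i m hi hm).1, zero_mul]
        · rw [(hP2 m j hm hj).2, zero_mul]
        · rw [(hQ2 i m hi hm).2, mul_zero]
    have k1 := key x y hx1 hy1 hx2 hy2
    have k2 := key y x hy1 hx1 hy2 hx2
    refine ⟨fun q => ?_, fun i j hi hj => ?_⟩
    · simp [Matrix.sub_apply, k1.1 q, k2.1 q]
    · have h1 := k1.2 i j hi hj; have h2 := k2.2 i j hi hj
      constructor <;> simp [Matrix.sub_apply, h1.1, h1.2, h2.1, h2.2]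

lemma omega_mem_blockAlg {S : Set (Fin (n+1))} {i j : Fin n}
    (h : i.castSucc ∈ S ↔ j.castSucc ∈ S) : Omega i j ∈ blockAlg n S := by
  intro a b ha hb
  constructor <;> rw [omega_apply] <;> rw [if_neg, if_neg, sub_zero] <;>
    rintro ⟨rfl, rfl⟩ <;> tauto

lemma ecol_mem_blockAlg {S : Set (Fin (n+1))} {k : Fin n}
    (h : k.castSucc ∈ S ↔ Fin.last n ∈ S) : Ecol k ∈ blockAlg n S := by
  intro a b ha hb
  constructor <;> rw [ecol_apply] <;> rw [if_neg] <;> rintro ⟨rfl, rfl⟩ <;> tauto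

lemma omega_mem_lastZeroAlg (i j : Fin n) : Omega i j ∈ lastZeroAlg n := by
  intro p
  constructor <;> simp [omega_apply, cs_ne_last i, cs_ne_last j]

lemma omega_mem_crossAlg {S : Set (Fin n)} {i j : Fin n} (h : i ∈ S ↔ j ∈ S) :
    Omega i j ∈ crossAlg n S := by
  refine ⟨fun q => ?_, fun a b ha hb => ?_⟩
  · simp [omega_apply, cs_ne_last i, cs_ne_last j]
  · constructor <;> rw [omega_apply] <;> rw [if_neg, if_neg, sub_zero] <;>
      rintro ⟨h1, h2⟩ <;>
      [skip; skip; skip; skip] <;>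
      rw [Fin.castSucc_inj] at h1 h2 <;> subst h1 <;> subst h2 <;> tauto

lemma ecol_mem_crossAlg (S : Set (Fin n)) (k : Fin n) : Ecol k ∈ crossAlg n S := by
  refine ⟨fun q => ?_, fun a b _ _ => ?_⟩
  · simp [ecol_apply, cs_ne_last k]
  · constructor <;> simp [ecol_apply, (cs_ne_last b).symm, (cs_ne_last a).symm]

lemma sbm_mul (p q r t : Fin (n+1)) :
    Matrix.single p q (1:ℝ) * Matrix.single r t 1 =
      if q = r then Matrix.single p t 1 else 0 := by
  split
  · next h => subst h; rw [Matrix.single_mul_single_same (c := 1) p q t 1, one_mul]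
  · next h => rw [Matrix.single_mul_single_of_ne (c := 1) p q r h]

lemma omega_self (i : Fin n) : Omega i i = 0 := by simp [Omega]

lemma omega_swap (i j : Fin n) : Omega j i = -Omega i j := by
  simp [Omega]

lemma lie_omega_omega {a b c : Fin n} (hab : a ≠ b) (hac : a ≠ c) (hbc : b ≠ c) :
    ⁅Omega a b, Omega a c⁆ = -Omega b c := by
  have hab' : a.castSucc ≠ b.castSucc := by simpa [Fin.castSucc_inj] using hab
  have hac' : a.castSucc ≠ c.castSucc := by simpa [Fin.castSucc_inj] using hac
  have hbc' : b.castSucc ≠ c.castSucc := by simpa [Fin.castSucc_inj] using hbc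
  rw [Ring.lie_def]
  simp only [Omega, sub_mul, mul_sub, sbm_mul]
  simp only [if_neg hab', if_neg hac', if_neg hbc', if_neg hab'.symm, if_neg hac'.symm,
    if_neg hbc'.symm, if_true, eq_self_iff_true]
  abel

lemma lie_omega_ecol {a b : Fin n} (hab : a ≠ b) : ⁅Omega a b, Ecol a⁆ = -Ecol b := by
  have hab' : a.castSucc ≠ b.castSucc := by simpa [Fin.castSucc_inj] using hab
  rw [Ring.lie_def]
  simp only [Omega, Ecol, sub_mul, mul_sub, sbm_mul]
  simp only [if_neg hab', if_neg hab'.symm, if_neg (cs_ne_last a), if_neg (cs_ne_last b),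
    if_neg (cs_ne_last a).symm, if_neg (cs_ne_last b).symm, if_true, eq_self_iff_true]
  abel

lemma se_eq_sum {M : Mat n} (hM : M ∈ seSet n) :
    M = (∑ i : Fin n, ∑ j : Fin n, ((1:ℝ)/2 * M i.castSucc j.castSucc) • Omega i j)
      + ∑ k : Fin n, M k.castSucc (Fin.last n) • Ecol k := by
  obtain ⟨h1, h2⟩ := hM
  ext p q
  induction p using Fin.lastCases with
  | last =>
    simp [Matrix.sum_apply, omega_apply, ecol_apply, h1,
      fun i : Fin n => (cs_ne_last i : i.castSucc ≠ Fin.last n)]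
  | cast a =>
    induction q using Fin.lastCases with
    | last =>
      simp [Matrix.sum_apply, omega_apply, ecol_apply, Fin.castSucc_inj,
        fun i : Fin n => (cs_ne_last i : i.castSucc ≠ Fin.last n)]
    | cast b =>
      simp only [Matrix.add_apply, Matrix.sum_apply, Matrix.smul_apply, omega_apply, ecol_apply,
        smul_eq_mul, Fin.castSucc_inj, (cs_ne_last b).symm, if_false, mul_zero,
        Finset.sum_const_zero, add_zero, mul_sub, mul_ite, mul_one,
        Finset.sum_sub_distrib, ite_and]
      have hswap : ∀ x : Fin n, (∑ x_1 : Fin n, if x = a then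
          if x_1 = b then (1:ℝ)/2 * M x.castSucc x_1.castSucc else 0 else 0)
          = if x = a then 1/2 * M x.castSucc b.castSucc else 0 := by
        intro x
        split <;> simp [Finset.sum_ite_eq']
      simp only [hswap, Finset.sum_ite_eq', Finset.mem_univ, if_true, ite_self,
        Finset.sum_const_zero, add_zero]
      linarith [h2 a b]

/-- The star pattern: edges (1,j) for j=2..n and edge (1,n+1). -/
def starMap (m : ℕ) : Fin (m+1) → Fin (m+2) × Fin (m+2) := fun j =>
  if j = 0 then ((0 : Fin (m+1)).castSucc, Fin.last (m+1))
  else ((0 : Fin (m+1)).castSucc, j.castSucc)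

def starSet (m : ℕ) : Set (Fin (m+2) × Fin (m+2)) := Set.range (starMap m)

lemma starMap_injective (m : ℕ) : Function.Injective (starMap m) := by
  intro a b hab
  unfold starMap at hab
  by_cases ha : a = 0 <;> by_cases hb : b = 0 <;> simp [ha, hb] at hab ⊢
  · exact absurd hab.symm (cs_ne_last b)
  · exact hab

lemma starSet_ncard (m : ℕ) : (starSet m).ncard = m + 1 := by
  rw [starSet, ← Set.image_univ, Set.ncard_image_of_injective _ (starMap_injective m),
    Set.ncard_univ, Nat.card_eq_fintype_card, Fintype.card_fin]

lemma starSet_indexSet (m : ℕ) : IndexSet (starSet m) := by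
  rintro e ⟨j, rfl⟩
  unfold starMap
  by_cases hj : j = 0 <;> simp [hj]
  · exact Fin.lt_def.mpr (by simp)
  exact Fin.pos_iff_ne_zero.mpr hj

lemma gen_star (m : ℕ) : GeneratesSE (m+1) (starSet m) := by
  set K := LieSubalgebra.lieSpan ℝ (Mat (m+1)) (BLam (starSet m) : Set (Mat (m+1))) with hK
  apply Set.Subset.antisymm
  · have h : K ≤ seAlg (m+1) := by
      rw [LieSubalgebra.lieSpan_le]
      have h2 : BLam (starSet m) ≤ (seAlg (m+1)).toSubmodule :=
        Submodule.span_le.mpr (genSet_subset_se _)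
      exact fun x hx => h2 hx
    exact fun x hx => h hx
  · intro M hM
    have hgen : ∀ x ∈ genSet (starSet m), x ∈ K :=
      fun x hx => LieSubalgebra.subset_lieSpan (Submodule.subset_span hx)
    have hO0 : ∀ j : Fin (m+1), Omega 0 j ∈ K := by
      intro j
      by_cases hj : j = 0
      · subst hj; rw [omega_self]; exact K.zero_mem
      · refine hgen _ (Or.inl ⟨0, j, ⟨j, ?_⟩, rfl⟩)
        simp [starMap, hj]
    have hE0 : Ecol (0 : Fin (m+1)) ∈ K := by
      refine hgen _ (Or.inr ⟨0, ⟨0, ?_⟩, rfl⟩)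
      simp [starMap]
    have hO : ∀ i j : Fin (m+1), Omega i j ∈ K := by
      intro i j
      by_cases hij : i = j
      · subst hij; rw [omega_self]; exact K.zero_mem
      by_cases hi : i = 0
      · subst hi; exact hO0 j
      by_cases hj : j = 0
      · subst hj; rw [omega_swap]; exact neg_mem (hO0 i)
      · have hmem := K.lie_mem (hO0 i) (hO0 j)
        rw [lie_omega_omega (fun h => hi h.symm) (fun h => hj h.symm) hij] at hmem
        simpa using neg_mem hmem
    have hE : ∀ k : Fin (m+1), Ecol k ∈ K := by
      intro k
      by_cases hk : k = 0
      · subst hk; exact hE0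
      · have hmem := K.lie_mem (hO0 k) hE0
        rw [lie_omega_ecol (fun h => hk h.symm)] at hmem
        simpa using neg_mem hmem
    rw [SetLike.mem_coe, ← LieSubalgebra.mem_toSubmodule, se_eq_sum hM]
    refine Submodule.add_mem _ (Submodule.sum_mem _ fun i _ => Submodule.sum_mem _ fun j _ =>
      Submodule.smul_mem _ _ ?_) (Submodule.sum_mem _ fun k _ => Submodule.smul_mem _ _ ?_)
    · exact (LieSubalgebra.mem_toSubmodule K).mpr (hO i j)
    · exact (LieSubalgebra.mem_toSubmodule K).mpr (hE k)

open SimpleGraph in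
lemma reachable_sdiff_of_reachable {V : Type*} {G : SimpleGraph V} {v w : V}
    (h : (G \ SimpleGraph.fromEdgeSet {s(v,w)}).Reachable v w) {a b : V}
    (hab : G.Reachable a b) : (G \ SimpleGraph.fromEdgeSet {s(v,w)}).Reachable a b := by
  obtain ⟨p⟩ := hab
  induction p with
  | nil => exact Reachable.refl _
  | @cons a c b hadj p ih =>
    refine Reachable.trans ?_ ih
    by_cases he : s(a, c) = s(v, w)
    · rw [Sym2.eq_iff] at he
      rcases he with ⟨rfl, rfl⟩ | ⟨rfl, rfl⟩
      · exact h
      · exact h.symm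
    · exact SimpleGraph.Adj.reachable
        (by simp only [SimpleGraph.sdiff_adj, SimpleGraph.fromEdgeSet_adj,
              Set.mem_singleton_iff]; exact ⟨hadj, by tauto⟩)

open SimpleGraph in
theorem conn_bound {V : Type*} [Fintype V] [DecidableEq V] :
    ∀ (m : ℕ) (G : SimpleGraph V), G.edgeSet.ncard = m → G.Connected →
      Fintype.card V ≤ m + 1 ∧ (Fintype.card V = m + 1 → G.IsAcyclic) := by
  intro m
  induction m using Nat.strong_induction_on with
  | _ m IH =>
    intro G hm hc
    by_cases hac : G.IsAcyclic
    · have htree : G.IsTree := ⟨hc, hac⟩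
      haveI : Fintype G.edgeSet := (Set.toFinite _).fintype
      have hcard := htree.card_edgeFinset
      have h2 : G.edgeSet.ncard = G.edgeSet.toFinset.card := Set.ncard_eq_toFinset_card' _
      have h3 : G.edgeFinset.card = G.edgeSet.toFinset.card := rfl
      exact ⟨by omega, fun _ => hac⟩
    · rw [isAcyclic_iff_forall_adj_isBridge] at hac
      push_neg at hac
      obtain ⟨v, w, hadj, hnb⟩ := hac
      rw [isBridge_iff] at hnb
      push_neg at hnb
      have hreach : (G \ fromEdgeSet {s(v,w)}).Reachable v w := hnb
      set G' := G \ fromEdgeSet {s(v,w)} with hG'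
      have hc' : G'.Connected := by
        rw [connected_iff]
        exact ⟨fun a b => reachable_sdiff_of_reachable hreach (hc.preconnected a b),
          hc.nonempty⟩
      have hes : G'.edgeSet = G.edgeSet \ {s(v,w)} := by
        rw [hG', edgeSet_sdiff, edgeSet_fromEdgeSet, edgeSet_sdiff_sdiff_isDiag]
      have hmem : s(v,w) ∈ G.edgeSet := G.mem_edgeSet.2 hadj
      have hm1 : 1 ≤ m := by
        have : 0 < G.edgeSet.ncard := (Set.ncard_pos (Set.toFinite _)).2 ⟨_, hmem⟩
        omega
      have hes' : G'.edgeSet.ncard = m - 1 := by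
        rw [hes, Set.ncard_diff_singleton_of_mem hmem, hm]
      have := IH (m-1) (by omega) G' hes' hc'
      exact ⟨by omega, by omega⟩

lemma edge_count {α : Type*} [Fintype α] (r : α → α → Prop) :
    (SimpleGraph.fromRel r).edgeSet.ncard ≤ {e : α × α | r e.1 e.2}.ncard := by
  have hsub : (SimpleGraph.fromRel r).edgeSet ⊆
      (fun e : α × α => s(e.1, e.2)) '' {e : α × α | r e.1 e.2} := by
    intro e he
    induction e with
    | _ a b =>
      rw [SimpleGraph.mem_edgeSet, SimpleGraph.fromRel_adj] at he
      obtain ⟨hne, h | h⟩ := he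
      · exact ⟨(a,b), h, rfl⟩
      · exact ⟨(b,a), h, Sym2.eq_swap⟩
  calc (SimpleGraph.fromRel r).edgeSet.ncard
      ≤ ((fun e : α × α => s(e.1, e.2)) '' {e : α × α | r e.1 e.2}).ncard :=
        Set.ncard_le_ncard hsub (Set.toFinite _)
    _ ≤ _ := Set.ncard_image_le (Set.toFinite _)

lemma span_le_alg {n : ℕ} (Λ : Set (Fin (n+1) × Fin (n+1))) (V : LieSubalgebra ℝ (Mat n))
    (h : genSet Λ ⊆ V) (hG : GeneratesSE n Λ) : seSet n ⊆ (V : Set (Mat n)) := by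
  rw [← hG]
  have h1 : LieSubalgebra.lieSpan ℝ (Mat n) (BLam Λ : Set (Mat n)) ≤ V := by
    rw [LieSubalgebra.lieSpan_le]
    have h2 : BLam Λ ≤ V.toSubmodule := Submodule.span_le.mpr h
    exact fun x hx => h2 hx
  exact fun x hx => h1 hx

lemma fullGraph_connected {n : ℕ} (Λ : Set (Fin (n+1) × Fin (n+1))) (hI : IndexSet Λ)
    (hG : GeneratesSE n Λ) :
    (SimpleGraph.fromRel (fun p q : Fin (n+1) => (p,q) ∈ Λ)).Connected := by
  set G := SimpleGraph.fromRel (fun p q : Fin (n+1) => (p,q) ∈ Λ) with hGdef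
  rw [SimpleGraph.connected_iff]
  refine ⟨?_, ⟨Fin.last n⟩⟩
  intro p q
  by_contra hpq
  set S : Set (Fin (n+1)) := {r | G.Reachable p r} with hS
  have hpS : p ∈ S := SimpleGraph.Reachable.refl p
  have hqS : q ∉ S := hpq
  have hedge : ∀ a b : Fin (n+1), (a, b) ∈ Λ → (a ∈ S ↔ b ∈ S) := by
    intro a b hab
    have hadj : G.Adj a b := by
      rw [hGdef, SimpleGraph.fromRel_adj]
      exact ⟨(hI _ hab).ne, Or.inl hab⟩
    exact ⟨fun ha => ha.trans hadj.reachable, fun hb => hb.trans hadj.symm.reachable⟩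
  have hsub : seSet n ⊆ (blockAlg n S : Set (Mat n)) := by
    refine span_le_alg Λ _ ?_ hG
    rintro M (⟨i, j, hij, rfl⟩ | ⟨k, hk, rfl⟩)
    · exact omega_mem_blockAlg (hedge _ _ hij)
    · exact ecol_mem_blockAlg (hedge _ _ hk)
  have hpq' : p ≠ q := fun h => hqS (h ▸ hpS)
  rcases Fin.eq_castSucc_or_eq_last p with ⟨a, rfl⟩ | rfl
  · rcases Fin.eq_castSucc_or_eq_last q with ⟨b, rfl⟩ | rfl
    · have hab : a.castSucc ≠ b.castSucc := hpq'
      have hneg : ¬(b.castSucc = a.castSucc ∧ a.castSucc = b.castSucc) := fun h => hab h.2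
      have h0 := (hsub (omega_mem_se a b) _ _ hpS hqS).1
      rw [omega_apply, if_pos ⟨rfl, rfl⟩, if_neg hneg] at h0
      norm_num at h0
    · have h0 := (hsub (ecol_mem_se a) _ _ hpS hqS).1
      rw [ecol_apply, if_pos ⟨rfl, rfl⟩] at h0
      norm_num at h0
  · rcases Fin.eq_castSucc_or_eq_last q with ⟨b, rfl⟩ | rfl
    · have h0 := (hsub (ecol_mem_se b) _ _ hpS hqS).2
      rw [ecol_apply, if_pos ⟨rfl, rfl⟩] at h0
      norm_num at h0
    · exact hpq' rfl

lemma solidGraph_connected {n : ℕ} (hn : 1 ≤ n) (Λ : Set (Fin (n+1) × Fin (n+1)))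
    (hI : IndexSet Λ) (hG : GeneratesSE n Λ) :
    (SimpleGraph.fromRel (fun i j : Fin n => (i.castSucc, j.castSucc) ∈ Λ)).Connected := by
  set G := SimpleGraph.fromRel (fun i j : Fin n => (i.castSucc, j.castSucc) ∈ Λ) with hGdef
  rw [SimpleGraph.connected_iff]
  refine ⟨?_, ⟨⟨0, hn⟩⟩⟩
  intro p q
  by_contra hpq
  set S : Set (Fin n) := {r | G.Reachable p r} with hS
  have hpS : p ∈ S := SimpleGraph.Reachable.refl p
  have hqS : q ∉ S := hpq
  have hedge : ∀ a b : Fin n, (a.castSucc, b.castSucc) ∈ Λ → (a ∈ S ↔ b ∈ S) := by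
    intro a b hab
    have hne : a ≠ b := fun h => by
      have := (hI _ hab).ne
      exact this (by rw [h])
    have hadj : G.Adj a b := by
      rw [hGdef, SimpleGraph.fromRel_adj]
      exact ⟨hne, Or.inl hab⟩
    exact ⟨fun ha => ha.trans hadj.reachable, fun hb => hb.trans hadj.symm.reachable⟩
  have hsub : seSet n ⊆ (crossAlg n S : Set (Mat n)) := by
    refine span_le_alg Λ _ ?_ hG
    rintro M (⟨i, j, hij, rfl⟩ | ⟨k, _, rfl⟩)
    · exact omega_mem_crossAlg (hedge _ _ hij)
    · exact ecol_mem_crossAlg S k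
  have hpq' : p ≠ q := fun h => hqS (h ▸ hpS)
  have hneg : ¬(q.castSucc = p.castSucc ∧ p.castSucc = q.castSucc) := by
    rintro ⟨h1, -⟩
    exact hpq' (Fin.castSucc_inj.mp h1).symm
  have h0 := ((hsub (omega_mem_se p q)).2 p q hpS hqS).1
  rw [omega_apply, if_pos ⟨rfl, rfl⟩, if_neg hneg] at h0
  norm_num at h0

lemma exists_broken {n : ℕ} (hn : 1 ≤ n) (Λ : Set (Fin (n+1) × Fin (n+1)))
    (hG : GeneratesSE n Λ) : ∃ k : Fin n, (k.castSucc, Fin.last n) ∈ Λ := by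
  by_contra h
  push_neg at h
  have hsub : seSet n ⊆ (lastZeroAlg n : Set (Mat n)) := by
    refine span_le_alg Λ _ ?_ hG
    rintro M (⟨i, j, _, rfl⟩ | ⟨k, hk, rfl⟩)
    · exact omega_mem_lastZeroAlg i j
    · exact absurd hk (h k)
  have h0 := (hsub (ecol_mem_se ⟨0, hn⟩) (Fin.castSucc ⟨0, hn⟩)).1
  rw [ecol_apply, if_pos ⟨rfl, rfl⟩] at h0
  norm_num at h0

end Stmt12Aux

open Stmt12Aux

/-- Every index set Λ with B_Λ generating se(n) satisfies |Λ| ≥ n;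
the bound is attained; and any Λ attaining it consists of exactly n−1 pairs (i,j) with
j ≤ n whose edges form a spanning tree of {1,…,n}, together with exactly one pair (k,n+1). -/
theorem stmt12 (n : ℕ) (hn : 1 ≤ n) :
    (∀ Λ : Set (Fin (n + 1) × Fin (n + 1)), IndexSet Λ → GeneratesSE n Λ →
      n ≤ Λ.ncard) ∧
    (∃ Λ : Set (Fin (n + 1) × Fin (n + 1)), IndexSet Λ ∧ GeneratesSE n Λ ∧
      Λ.ncard = n) ∧
    (∀ Λ : Set (Fin (n + 1) × Fin (n + 1)), IndexSet Λ → GeneratesSE n Λ →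
      Λ.ncard = n →
      {e ∈ Λ | e.2 ≠ Fin.last n}.ncard = n - 1 ∧
      (SimpleGraph.fromRel (fun i j : Fin n => (i.castSucc, j.castSucc) ∈ Λ)).Connected ∧
      (SimpleGraph.fromRel (fun i j : Fin n => (i.castSucc, j.castSucc) ∈ Λ)).IsAcyclic ∧
      {e ∈ Λ | e.2 = Fin.last n}.ncard = 1) := by
  refine ⟨?_, ?_, ?_⟩
  · intro Λ hI hG
    have hconn := fullGraph_connected Λ hI hG
    have hb1 := (conn_bound ((SimpleGraph.fromRel
      (fun p q : Fin (n+1) => (p,q) ∈ Λ)).edgeSet.ncard) _ rfl hconn).1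
    have hc : Fintype.card (Fin (n+1)) = n + 1 := Fintype.card_fin _
    have he : (SimpleGraph.fromRel
        (fun p q : Fin (n+1) => (p,q) ∈ Λ)).edgeSet.ncard ≤ Λ.ncard := by
      have h := edge_count (fun p q : Fin (n+1) => (p,q) ∈ Λ)
      have hset : {e : Fin (n+1) × Fin (n+1) | (e.1, e.2) ∈ Λ} = Λ := by ext e; simp
      rwa [hset] at h
    omega
  · obtain ⟨m, rfl⟩ : ∃ m, n = m + 1 := ⟨n - 1, by omega⟩
    exact ⟨starSet m, starSet_indexSet m, gen_star m, starSet_ncard m⟩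
  · intro Λ hI hG hcard
    have hunion : Λ = {e ∈ Λ | e.2 ≠ Fin.last n} ∪ {e ∈ Λ | e.2 = Fin.last n} := by
      ext e; by_cases he : e.2 = Fin.last n <;> simp [he]
    have hdisj : Disjoint {e ∈ Λ | e.2 ≠ Fin.last n} {e ∈ Λ | e.2 = Fin.last n} := by
      rw [Set.disjoint_left]; rintro e ⟨_, h1⟩ ⟨_, h2⟩; exact h1 h2
    have hsum : ({e ∈ Λ | e.2 ≠ Fin.last n}).ncard + ({e ∈ Λ | e.2 = Fin.last n}).ncard = n := by
      have h := Set.ncard_union_eq hdisj (Set.toFinite _) (Set.toFinite _)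
      rw [← hunion, hcard] at h
      omega
    have hBr1 : 1 ≤ ({e ∈ Λ | e.2 = Fin.last n}).ncard := by
      obtain ⟨k, hk⟩ := exists_broken hn Λ hG
      exact (Set.ncard_pos (Set.toFinite _)).2 ⟨(k.castSucc, Fin.last n), hk, rfl⟩
    have hconn := solidGraph_connected hn Λ hI hG
    have hb := conn_bound ((SimpleGraph.fromRel
      (fun i j : Fin n => (i.castSucc, j.castSucc) ∈ Λ)).edgeSet.ncard) _ rfl hconn
    have hc : Fintype.card (Fin n) = n := Fintype.card_fin _
    have he := edge_count (fun i j : Fin n => (i.castSucc, j.castSucc) ∈ Λ)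
    have hTinj : Set.InjOn (fun e : Fin n × Fin n => (e.1.castSucc, e.2.castSucc))
        {e : Fin n × Fin n | (e.1.castSucc, e.2.castSucc) ∈ Λ} := by
      intro a _ b _ hab
      rw [Prod.ext_iff] at hab ⊢
      exact ⟨Fin.castSucc_inj.mp hab.1, Fin.castSucc_inj.mp hab.2⟩
    have himg : (fun e : Fin n × Fin n => (e.1.castSucc, e.2.castSucc)) ''
        {e : Fin n × Fin n | (e.1.castSucc, e.2.castSucc) ∈ Λ} ⊆ {e ∈ Λ | e.2 ≠ Fin.last n} := by
      rintro e ⟨f, hf, rfl⟩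
      exact ⟨hf, cs_ne_last f.2⟩
    have hT2 : ({e : Fin n × Fin n | (e.1.castSucc, e.2.castSucc) ∈ Λ}).ncard ≤
        ({e ∈ Λ | e.2 ≠ Fin.last n}).ncard := by
      rw [← Set.ncard_image_of_injOn hTinj]
      exact Set.ncard_le_ncard himg (Set.toFinite _)
    refine ⟨by omega, hconn, (hb.2 (by omega)), by omega⟩
end

section
/- Let c assign a positive real cost c(i,j) to each pair (i,j) with 1 ≤ i < j ≤ n and each pair (k,n+1) with 1 ≤ k ≤ n. Then the minimum of the total cost Σ_{(i,j)∈Λ} c(i,j) over all index sets Λ whose pattern subspace B_Λ generates se(n) as a Lie algebra equals (the minimum total edge weight of a spanning tree of the complete graph on {1,...,n} with edge weights c(i,j)) plus min_{1≤k≤n} c(k,n+1). -/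
open Matrix

attribute [local instance] LieRing.ofAssociativeRing

open SimpleGraph

variable {n : ℕ}

lemma del_connected {V : Type*} {G : SimpleGraph V} (hG : G.Connected) {v w : V}
    (hr : (G \ fromEdgeSet {s(v, w)}).Reachable v w) :
    (G \ fromEdgeSet {s(v, w)}).Connected := by
  set G' := G \ fromEdgeSet {s(v, w)} with hG'
  have key : ∀ {x y : V}, G.Adj x y → G'.Reachable x y := by
    intro x y hxy
    by_cases he : s(x, y) = s(v, w)
    · rcases Sym2.eq_iff.mp he with ⟨rfl, rfl⟩ | ⟨rfl, rfl⟩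
      · exact hr
      · exact hr.symm
    · exact SimpleGraph.Adj.reachable (by
        rw [hG', sdiff_adj, fromEdgeSet_adj]
        exact ⟨hxy, fun h => he h.1⟩)
  have hpre : G'.Preconnected := by
    intro a b
    obtain ⟨p⟩ := hG.preconnected a b
    induction p with
    | nil => exact Reachable.refl _
    | cons h q ih => exact (key h).trans ih
  exact (connected_iff _).mpr ⟨hpre, ((connected_iff _).mp hG).2⟩

lemma exists_spanning_tree {V : Type*} [Finite V] {G : SimpleGraph V} (hG : G.Connected) :
    ∃ T : SimpleGraph V, T ≤ G ∧ T.Connected ∧ T.IsAcyclic := by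
  have hfin : {H : SimpleGraph V | H ≤ G ∧ H.Connected}.Finite := Set.toFinite _
  have hne2 : {H : SimpleGraph V | H ≤ G ∧ H.Connected}.Nonempty := ⟨G, le_refl _, hG⟩
  obtain ⟨T, ⟨hTG, hTc⟩, hmin⟩ := Set.Finite.exists_minimalFor
    (fun H : SimpleGraph V => (H.edgeSet).ncard) _ hfin hne2
  refine ⟨T, hTG, hTc, ?_⟩
  by_contra hnac
  rw [isAcyclic_iff_forall_adj_isBridge] at hnac
  push_neg at hnac
  obtain ⟨v, w, hvw, hnb⟩ := hnac
  rw [isBridge_iff] at hnb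
  push_neg at hnb
  have hr := hnb
  set T' := T \ fromEdgeSet {s(v, w)} with hT'
  have hT'c : T'.Connected := del_connected hTc hr
  have hlt : T'.edgeSet.ncard < T.edgeSet.ncard := by
    apply Set.ncard_lt_ncard _ (Set.toFinite _)
    constructor
    · rw [hT', edgeSet_sdiff]
      exact Set.diff_subset
    · intro hsub
      have : s(v, w) ∈ T'.edgeSet := hsub hvw
      rw [hT', edgeSet_sdiff] at this
      exact this.2 (by simp [hvw.ne])
  have : T.edgeSet.ncard ≤ T'.edgeSet.ncard := hmin (j := T') ⟨le_trans (sdiff_le) hTG, hT'c⟩ (le_of_lt hlt)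
  omega
open Matrix

lemma csne (i : Fin n) : i.castSucc ≠ Fin.last n := (Fin.castSucc_lt_last i).ne

lemma csinj {i j : Fin n} (h : i ≠ j) : i.castSucc ≠ j.castSucc := by
  simpa [Fin.castSucc_inj] using h

lemma omega_bracket {i j k : Fin n} (hij : i ≠ j) (hjk : j ≠ k) (hik : i ≠ k) :
    Omega i j * Omega j k - Omega j k * Omega i j = Omega i k := by
  have h12 := csinj hij
  have h23 := csinj hjk
  have h13 := csinj hik
  have e1 : single j.castSucc i.castSucc (1:ℝ) * single j.castSucc k.castSucc 1
      = 0 := Matrix.single_mul_single_of_ne _ _ _ _ h12 _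
  have e2 : single i.castSucc j.castSucc (1:ℝ) * single k.castSucc j.castSucc 1
      = 0 := Matrix.single_mul_single_of_ne _ _ _ _ h23 _
  have e3 : single j.castSucc k.castSucc (1:ℝ) * single i.castSucc j.castSucc 1
      = 0 := Matrix.single_mul_single_of_ne _ _ _ _ h13.symm _
  have e4 : single k.castSucc j.castSucc (1:ℝ) * single i.castSucc j.castSucc 1
      = 0 := Matrix.single_mul_single_of_ne _ _ _ _ h12.symm _
  have e5 : single j.castSucc k.castSucc (1:ℝ) * single j.castSucc i.castSucc 1
      = 0 := Matrix.single_mul_single_of_ne _ _ _ _ h23.symm _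
  have e6 : single k.castSucc j.castSucc (1:ℝ) * single j.castSucc i.castSucc 1
      = single k.castSucc i.castSucc 1 := by
    rw [Matrix.single_mul_single_same, one_mul]
  have e7 : single i.castSucc j.castSucc (1:ℝ) * single j.castSucc k.castSucc 1
      = single i.castSucc k.castSucc 1 := by
    rw [Matrix.single_mul_single_same, one_mul]
  have e8 : single j.castSucc i.castSucc (1:ℝ) * single k.castSucc j.castSucc 1
      = 0 := Matrix.single_mul_single_of_ne _ _ _ _ h13 _
  simp only [Omega, sub_mul, mul_sub, e1, e2, e3, e4, e5, e6, e7, e8]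
  abel

lemma omega_ecol {i j : Fin n} (hij : i ≠ j) :
    Omega i j * Ecol j - Ecol j * Omega i j = Ecol i := by
  have h12 := csinj hij
  have e1 : single i.castSucc j.castSucc (1:ℝ) * single j.castSucc (Fin.last n) 1
      = single i.castSucc (Fin.last n) 1 := by
    rw [Matrix.single_mul_single_same, one_mul]
  have e2 : single j.castSucc i.castSucc (1:ℝ) * single j.castSucc (Fin.last n) 1
      = 0 := Matrix.single_mul_single_of_ne _ _ _ _ h12 _
  have e3 : single j.castSucc (Fin.last n) (1:ℝ) * single i.castSucc j.castSucc 1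
      = 0 := Matrix.single_mul_single_of_ne _ _ _ _ (csne i).symm _
  have e4 : single j.castSucc (Fin.last n) (1:ℝ) * single j.castSucc i.castSucc 1
      = 0 := Matrix.single_mul_single_of_ne _ _ _ _ (csne j).symm _
  simp only [Omega, Ecol, sub_mul, mul_sub, e1, e2, e3, e4]
  abel

lemma omega_swap (i j : Fin n) : Omega j i = -Omega i j := by
  simp [Omega]

lemma omega_apply (i j a b : Fin n) :
    Omega i j a.castSucc b.castSucc
      = (if i = a ∧ j = b then (1:ℝ) else 0) - (if j = a ∧ i = b then 1 else 0) := by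
  simp [Omega, Matrix.single, Fin.castSucc_inj]

lemma omega_apply_lastrow (i j : Fin n) (q : Fin (n+1)) : Omega i j (Fin.last n) q = 0 := by
  simp [Omega, Matrix.single, csne i, csne j, (csne i).symm, (csne j).symm]

lemma omega_apply_lastcol (i j : Fin n) (p : Fin (n+1)) : Omega i j p (Fin.last n) = 0 := by
  simp [Omega, Matrix.single, csne i, csne j, (csne i).symm, (csne j).symm]

lemma ecol_apply_cs (k a b : Fin n) : Ecol k a.castSucc b.castSucc = 0 := by
  simp [Ecol, Matrix.single, (csne b).symm]

lemma ecol_apply_lastrow (k : Fin n) (q : Fin (n+1)) : Ecol k (Fin.last n) q = 0 := by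
  simp [Ecol, Matrix.single, csne k, (csne k).symm]

lemma ecol_apply_last (k a : Fin n) :
    Ecol k a.castSucc (Fin.last n) = if k = a then (1:ℝ) else 0 := by
  simp [Ecol, Matrix.single, Fin.castSucc_inj]

lemma omega_mem_se (i j : Fin n) : Omega i j ∈ seSet n := by
  refine ⟨fun q => omega_apply_lastrow i j q, fun a b => ?_⟩
  rw [omega_apply, omega_apply]
  have c1 : (j = a ∧ i = b) ↔ (i = b ∧ j = a) := and_comm
  have c2 : (i = a ∧ j = b) ↔ (j = b ∧ i = a) := and_comm
  rw [if_congr c1 rfl rfl, if_congr c2 rfl rfl]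
  ring

lemma ecol_mem_se (k : Fin n) : Ecol k ∈ seSet n := by
  refine ⟨fun q => ecol_apply_lastrow k q, fun a b => ?_⟩
  rw [ecol_apply_cs, ecol_apply_cs, neg_zero]

lemma mul_key {C D : Mat n} (hC : C ∈ seSet n) (hD : D ∈ seSet n) (a b : Fin n) :
    (C * D) a.castSucc b.castSucc = (D * C) b.castSucc a.castSucc := by
  obtain ⟨hC1, hC2⟩ := hC
  obtain ⟨hD1, hD2⟩ := hD
  rw [Matrix.mul_apply, Matrix.mul_apply, Fin.sum_univ_castSucc, Fin.sum_univ_castSucc,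
    hD1, hC1, mul_zero, mul_zero, add_zero, add_zero]
  apply Finset.sum_congr rfl
  intro m _
  rw [hC2 a m, hD2 m b]
  ring

lemma se_bracket {A B : Mat n} (hA : A ∈ seSet n) (hB : B ∈ seSet n) :
    A * B - B * A ∈ seSet n := by
  refine ⟨fun q => ?_, fun a b => ?_⟩
  · rw [Matrix.sub_apply, Matrix.mul_apply, Matrix.mul_apply]
    simp [hA.1, hB.1]
  · rw [Matrix.sub_apply, Matrix.sub_apply, mul_key hA hB a b, mul_key hB hA a b]
    ring

lemma se_mem_span {L : Submodule ℝ (Mat n)}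
    (hO : ∀ i j : Fin n, i ≠ j → Omega i j ∈ L) (hE : ∀ k, Ecol k ∈ L)
    {M : Mat n} (hM : M ∈ seSet n) : M ∈ L := by
  obtain ⟨h1, h2⟩ := hM
  have hrep : M = (2⁻¹ : ℝ) • (∑ i : Fin n, ∑ j : Fin n, M i.castSucc j.castSucc • Omega i j)
      + ∑ k : Fin n, M k.castSucc (Fin.last n) • Ecol k := by
    ext p q
    induction p using Fin.lastCases with
    | last =>
      simp [Matrix.sum_apply, omega_apply_lastrow, ecol_apply_lastrow, h1]
    | cast a =>
      induction q using Fin.lastCases with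
      | last =>
        simp [Matrix.sum_apply, omega_apply_lastcol, ecol_apply_last, mul_ite,
          Finset.sum_ite_eq', Finset.sum_ite_eq]
      | cast b =>
        have oa : ∀ i j : Fin n, Omega i j a.castSucc b.castSucc
            = (if j = b ∧ i = a then (1:ℝ) else 0) - (if j = a ∧ i = b then 1 else 0) := by
          intro i j
          rw [omega_apply, if_congr and_comm rfl rfl]
        simp only [Matrix.add_apply, Matrix.smul_apply, Matrix.sum_apply, oa,
          ecol_apply_cs, smul_eq_mul, mul_sub, mul_zero, Finset.sum_const_zero, add_zero,
          mul_ite, mul_one, ite_and, Finset.sum_sub_distrib, Finset.sum_ite_eq,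
          Finset.sum_ite_eq', Finset.mem_univ, if_true]
        rw [h2 b a]
        ring
  rw [hrep]
  refine add_mem (Submodule.smul_mem _ _ (Submodule.sum_mem _ fun i _ =>
    Submodule.sum_mem _ fun j _ => Submodule.smul_mem _ _ ?_))
    (Submodule.sum_mem _ fun k _ => Submodule.smul_mem _ _ (hE k))
  by_cases h : i = j
  · subst h
    have : Omega i i = 0 := by simp [Omega]
    rw [this]; exact zero_mem _
  · exact hO i j h
def seLie (n : ℕ) : LieSubalgebra ℝ (Mat n) :=
  { seL n with
    lie_mem' := by
      intro x y hx hy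
      show x * y - y * x ∈ seSet n
      exact se_bracket hx hy }

lemma bracket_mem_lieSpan {s : Set (Mat n)} {A B : Mat n}
    (hA : A ∈ LieSubalgebra.lieSpan ℝ (Mat n) s) (hB : B ∈ LieSubalgebra.lieSpan ℝ (Mat n) s) :
    A * B - B * A ∈ LieSubalgebra.lieSpan ℝ (Mat n) s := by
  have := (LieSubalgebra.lieSpan ℝ (Mat n) s).lie_mem hA hB
  rwa [Ring.lie_def] at this

lemma generates_of {Λ : Set (Fin (n + 1) × Fin (n + 1))}
    (H : SimpleGraph (Fin n)) (hHc : H.Connected)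
    (hsolid : ∀ i j : Fin n, H.Adj i j →
      (i.castSucc, j.castSucc) ∈ Λ ∨ (j.castSucc, i.castSucc) ∈ Λ)
    (k₀ : Fin n) (hk₀ : (k₀.castSucc, Fin.last n) ∈ Λ) :
    GeneratesSE n Λ := by
  set L := LieSubalgebra.lieSpan ℝ (Mat n) (BLam Λ : Set (Mat n)) with hL
  have hgen : ∀ M ∈ genSet Λ, M ∈ L := fun M hM =>
    LieSubalgebra.subset_lieSpan (Submodule.subset_span hM)
  have hedge : ∀ i j : Fin n, H.Adj i j → Omega i j ∈ L := by
    intro i j h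
    rcases hsolid i j h with h' | h'
    · exact hgen _ (Or.inl ⟨i, j, h', rfl⟩)
    · have h2 : Omega j i ∈ L := hgen _ (Or.inl ⟨j, i, h', rfl⟩)
      rw [omega_swap j i]
      exact neg_mem h2
  have homega : ∀ i j : Fin n, i ≠ j → Omega i j ∈ L := by
    have hwalk : ∀ (i j : Fin n) (w : H.Walk i j), i ≠ j → Omega i j ∈ L := by
      intro i j w
      induction w with
      | nil => intro h; exact absurd rfl h
      | @cons u v x h q ih =>
        intro huj
        by_cases hvx : v = x
        · subst hvx; exact hedge _ _ h
        · exact omega_bracket h.ne hvx huj ▸ bracket_mem_lieSpan (hedge _ _ h) (ih hvx)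
    intro i j hij
    obtain ⟨w⟩ := hHc.preconnected i j
    exact hwalk i j w hij
  have hecol : ∀ k : Fin n, Ecol k ∈ L := by
    have h0 : Ecol k₀ ∈ L := hgen _ (Or.inr ⟨k₀, hk₀, rfl⟩)
    intro k
    by_cases h : k = k₀
    · subst h; exact h0
    · exact omega_ecol h ▸ bracket_mem_lieSpan (homega _ _ h) h0
  apply Set.eq_of_subset_of_subset
  · intro x hx
    have : L ≤ seLie n := by
      rw [hL]
      apply LieSubalgebra.lieSpan_le.mpr
      intro M hM
      refine Submodule.span_le.mpr ?_ hM
      rintro N (⟨i, j, _, rfl⟩ | ⟨k, _, rfl⟩)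
      · exact omega_mem_se i j
      · exact ecol_mem_se k
    exact this hx
  · intro M hM
    exact se_mem_span (L := L.toSubmodule) homega hecol hM

lemma exists_broken {Λ : Set (Fin (n + 1) × Fin (n + 1))} (hn : 1 ≤ n)
    (hG : GeneratesSE n Λ) : ∃ k : Fin n, (k.castSucc, Fin.last n) ∈ Λ := by
  by_contra hcon
  push_neg at hcon
  set K : LieSubalgebra ℝ (Mat n) :=
    { carrier := {M : Mat n | (∀ q, M (Fin.last n) q = 0) ∧ ∀ p, M p (Fin.last n) = 0}
      add_mem' := by
        rintro a b ⟨ha1, ha2⟩ ⟨hb1, hb2⟩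
        exact ⟨fun q => by simp [Matrix.add_apply, ha1, hb1],
          fun p => by simp [Matrix.add_apply, ha2, hb2]⟩
      zero_mem' := ⟨fun q => by simp, fun p => by simp⟩
      smul_mem' := by
        rintro t a ⟨ha1, ha2⟩
        exact ⟨fun q => by simp [Matrix.smul_apply, ha1],
          fun p => by simp [Matrix.smul_apply, ha2]⟩
      lie_mem' := by
        rintro x y ⟨hx1, hx2⟩ ⟨hy1, hy2⟩
        rw [Ring.lie_def]
        refine ⟨fun q => ?_, fun p => ?_⟩
        · rw [Matrix.sub_apply, Matrix.mul_apply, Matrix.mul_apply]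
          simp [hx1, hy1]
        · rw [Matrix.sub_apply, Matrix.mul_apply, Matrix.mul_apply]
          simp [hx2, hy2] } with hKdef
  have hle : LieSubalgebra.lieSpan ℝ (Mat n) (BLam Λ : Set (Mat n)) ≤ K := by
    apply LieSubalgebra.lieSpan_le.mpr
    intro M hM
    have hsub : genSet Λ ⊆ (K.toSubmodule : Set (Mat n)) := ?_
    exact Submodule.span_le.mpr hsub hM
    rintro N (⟨i, j, hmem, rfl⟩ | ⟨k, hmem, rfl⟩)
    · exact ⟨omega_apply_lastrow i j, omega_apply_lastcol i j⟩
    · exact absurd hmem (hcon k)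
  set k1 : Fin n := ⟨0, hn⟩ with hk1
  have hse : Ecol k1 ∈ seSet n := ecol_mem_se k1
  rw [← hG] at hse
  have h2 := (hle hse).2 k1.castSucc
  rw [ecol_apply_last, if_pos rfl] at h2
  exact one_ne_zero h2

def solidGraph {n : ℕ} (Λ : Set (Fin (n + 1) × Fin (n + 1))) : SimpleGraph (Fin n) where
  Adj i j := i ≠ j ∧ ((i.castSucc, j.castSucc) ∈ Λ ∨ (j.castSucc, i.castSucc) ∈ Λ)
  symm := ⟨by rintro i j ⟨h1, h2⟩; exact ⟨h1.symm, h2.symm⟩⟩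
  loopless := ⟨by rintro i ⟨h1, _⟩; exact h1 rfl⟩

lemma prod_zero_helper {S : Set (Fin n)} {A B : Mat n}
    (hBrow : ∀ q, B (Fin.last n) q = 0)
    (hA2 : ∀ i j : Fin n, i ∈ S → j ∉ S →
      A i.castSucc j.castSucc = 0 ∧ A j.castSucc i.castSucc = 0)
    (hB2 : ∀ i j : Fin n, i ∈ S → j ∉ S →
      B i.castSucc j.castSucc = 0 ∧ B j.castSucc i.castSucc = 0)
    {i j : Fin n} (hi : i ∈ S) (hj : j ∉ S) :
    (A * B) i.castSucc j.castSucc = 0 ∧ (A * B) j.castSucc i.castSucc = 0 := by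
  constructor
  · rw [Matrix.mul_apply, Fin.sum_univ_castSucc, hBrow, mul_zero, add_zero]
    apply Finset.sum_eq_zero
    intro m _
    by_cases hm : m ∈ S
    · rw [(hB2 m j hm hj).1, mul_zero]
    · rw [(hA2 i m hi hm).1, zero_mul]
  · rw [Matrix.mul_apply, Fin.sum_univ_castSucc, hBrow, mul_zero, add_zero]
    apply Finset.sum_eq_zero
    intro m _
    by_cases hm : m ∈ S
    · rw [(hA2 m j hm hj).2, zero_mul]
    · rw [(hB2 i m hi hm).2, mul_zero]

lemma solid_connected {Λ : Set (Fin (n + 1) × Fin (n + 1))} (hn : 1 ≤ n)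
    (hI : IndexSet Λ) (hG : GeneratesSE n Λ) : (solidGraph Λ).Connected := by
  have hne : Nonempty (Fin n) := ⟨⟨0, hn⟩⟩
  rw [SimpleGraph.connected_iff]
  refine ⟨fun a b => ?_, hne⟩
  by_contra hreach
  set S : Set (Fin n) := {x | (solidGraph Λ).Reachable a x} with hS
  have hSc : ∀ x y, x ∈ S → (solidGraph Λ).Adj x y → y ∈ S :=
    fun x y hx h => hx.trans h.reachable
  set K : LieSubalgebra ℝ (Mat n) :=
    { carrier := {M : Mat n | (∀ q, M (Fin.last n) q = 0) ∧ ∀ i j : Fin n, i ∈ S → j ∉ S →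
        M i.castSucc j.castSucc = 0 ∧ M j.castSucc i.castSucc = 0}
      add_mem' := by
        rintro x y ⟨hx1, hx2⟩ ⟨hy1, hy2⟩
        refine ⟨fun q => by simp [Matrix.add_apply, hx1, hy1], fun i j hi hj => ?_⟩
        obtain ⟨ha, hb⟩ := hx2 i j hi hj
        obtain ⟨hc, hd⟩ := hy2 i j hi hj
        simp [Matrix.add_apply, ha, hb, hc, hd]
      zero_mem' := ⟨fun q => by simp, fun i j _ _ => by simp⟩
      smul_mem' := by
        rintro t x ⟨hx1, hx2⟩
        refine ⟨fun q => by simp [Matrix.smul_apply, hx1], fun i j hi hj => ?_⟩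
        obtain ⟨ha, hb⟩ := hx2 i j hi hj
        simp [Matrix.smul_apply, ha, hb]
      lie_mem' := by
        rintro x y ⟨hx1, hx2⟩ ⟨hy1, hy2⟩
        rw [Ring.lie_def]
        refine ⟨fun q => ?_, fun i j hi hj => ?_⟩
        · rw [Matrix.sub_apply, Matrix.mul_apply, Matrix.mul_apply]
          simp [hx1, hy1]
        · obtain ⟨ha, hb⟩ := prod_zero_helper hy1 hx2 hy2 hi hj
          obtain ⟨hc, hd⟩ := prod_zero_helper hx1 hy2 hx2 hi hj
          constructor
          · rw [Matrix.sub_apply, ha, hc, sub_zero]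
          · rw [Matrix.sub_apply, hb, hd, sub_zero] } with hKdef
  have hle : LieSubalgebra.lieSpan ℝ (Mat n) (BLam Λ : Set (Mat n)) ≤ K := by
    apply LieSubalgebra.lieSpan_le.mpr
    intro M hM
    have hsub : genSet Λ ⊆ (K.toSubmodule : Set (Mat n)) := ?_
    exact Submodule.span_le.mpr hsub hM
    rintro N (⟨i, j, hmem, rfl⟩ | ⟨k, hmem, rfl⟩)
    · have hij : i ≠ j := by
        intro h
        subst h
        exact lt_irrefl _ (hI _ hmem)
      have hadj : (solidGraph Λ).Adj i j := ⟨hij, Or.inl hmem⟩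
      refine ⟨omega_apply_lastrow i j, fun p q hp hq => ?_⟩
      have hc1 : ¬(i = p ∧ j = q) := by
        rintro ⟨rfl, rfl⟩
        exact hq (hSc i j hp hadj)
      have hc2 : ¬(j = p ∧ i = q) := by
        rintro ⟨rfl, rfl⟩
        exact hq (hSc j i hp hadj.symm)
      have hc3 : ¬(i = q ∧ j = p) := by
        rintro ⟨rfl, rfl⟩
        exact hq (hSc j i hp hadj.symm)
      have hc4 : ¬(j = q ∧ i = p) := by
        rintro ⟨rfl, rfl⟩
        exact hq (hSc i j hp hadj)
      rw [omega_apply, omega_apply, if_neg hc1, if_neg hc2, if_neg hc4, if_neg hc3]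
      simp
    · exact ⟨ecol_apply_lastrow k, fun p q _ _ => ⟨ecol_apply_cs k p q, ecol_apply_cs k q p⟩⟩
  have hab : a ≠ b := by
    intro h
    subst h
    exact hreach (SimpleGraph.Reachable.refl a)
  have hse : Omega a b ∈ seSet n := omega_mem_se a b
  rw [← hG] at hse
  have h2 := ((hle hse).2 a b (SimpleGraph.Reachable.refl a) hreach).1
  rw [omega_apply, if_pos ⟨rfl, rfl⟩, if_neg (fun h => hab h.2)] at h2
  norm_num at h2


/-- For positive costs c, the minimum of the total cost
`Σ_{(i,j)∈Λ} c(i,j)` over index sets Λ with B_Λ generating se(n) as a Lie algebra equals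
(the minimum total edge weight of a spanning tree of the complete graph on {1,…,n})
plus `min_{1≤k≤n} c(k,n+1)`. -/
theorem stmt13 (n : ℕ) (hn : 1 ≤ n) (c : Fin (n + 1) × Fin (n + 1) → ℝ)
    (hc : ∀ p q : Fin (n + 1), p < q → 0 < c (p, q)) :
    IsLeast {x : ℝ | ∃ Λ : Set (Fin (n + 1) × Fin (n + 1)),
        IndexSet Λ ∧ GeneratesSE n Λ ∧ x = ∑ᶠ e ∈ Λ, c e}
      (sInf {w : ℝ | ∃ T : SimpleGraph (Fin n), T.Connected ∧ T.IsAcyclic ∧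
          w = ∑ᶠ e ∈ {e : Fin n × Fin n | e.1 < e.2 ∧ T.Adj e.1 e.2},
                c (e.1.castSucc, e.2.castSucc)} +
       sInf {w : ℝ | ∃ k : Fin n, w = c (k.castSucc, Fin.last n)}) := by
  have hne : Nonempty (Fin n) := ⟨⟨0, hn⟩⟩
  set W : SimpleGraph (Fin n) → ℝ := fun T =>
    ∑ᶠ e ∈ {e : Fin n × Fin n | e.1 < e.2 ∧ T.Adj e.1 e.2}, c (e.1.castSucc, e.2.castSucc)
    with hW
  set TS : Set ℝ := {w : ℝ | ∃ T : SimpleGraph (Fin n), T.Connected ∧ T.IsAcyclic ∧ w = W T}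
    with hTS
  set BS : Set ℝ := {w : ℝ | ∃ k : Fin n, w = c (k.castSucc, Fin.last n)} with hBS
  -- basic facts
  have hTSfin : TS.Finite := by
    apply Set.Finite.subset (Set.Finite.image W (Set.finite_univ (α := SimpleGraph (Fin n))))
    rintro w ⟨T, _, _, rfl⟩
    exact ⟨T, Set.mem_univ _, rfl⟩
  have hBSfin : BS.Finite := by
    apply Set.Finite.subset (Set.finite_range fun k : Fin n => c (k.castSucc, Fin.last n))
    rintro w ⟨k, rfl⟩
    exact ⟨k, rfl⟩
  have hTSne : TS.Nonempty := by
    obtain ⟨T, _, hTc, hTa⟩ := exists_spanning_tree (connected_top (V := Fin n))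
    exact ⟨W T, T, hTc, hTa, rfl⟩
  have hBSne : BS.Nonempty := ⟨c ((⟨0, hn⟩ : Fin n).castSucc, Fin.last n), ⟨0, hn⟩, rfl⟩
  -- the image map for edge sets
  set φ : Fin n × Fin n → Fin (n + 1) × Fin (n + 1) :=
    fun e => (e.1.castSucc, e.2.castSucc) with hφ
  have hφinj : Function.Injective φ := by
    rintro ⟨a, b⟩ ⟨a', b'⟩ h
    simp only [hφ, Prod.mk.injEq, Fin.castSucc_inj] at h
    simp [Prod.ext_iff, h.1, h.2]
  constructor
  · -- membership
    obtain ⟨T₀, hT₀c, hT₀a, hw⟩ := hTSne.csInf_mem hTSfin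
    obtain ⟨k₀, hk₀⟩ := hBSne.csInf_mem hBSfin
    set PT : Set (Fin n × Fin n) := {e | e.1 < e.2 ∧ T₀.Adj e.1 e.2} with hPT
    refine ⟨φ '' PT ∪ {(k₀.castSucc, Fin.last n)}, ?_, ?_, ?_⟩
    · rintro e (⟨⟨i, j⟩, ⟨hlt, _⟩, rfl⟩ | he)
      · exact Fin.castSucc_lt_castSucc_iff.mpr hlt
      · rw [Set.mem_singleton_iff] at he
        subst he
        exact Fin.castSucc_lt_last k₀
    · apply generates_of (H := T₀) hT₀c _ k₀ (Or.inr rfl)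
      intro i j hadj
      rcases lt_trichotomy i j with h | h | h
      · exact Or.inl (Or.inl ⟨(i, j), ⟨h, hadj⟩, rfl⟩)
      · exact absurd h hadj.ne
      · exact Or.inr (Or.inl ⟨(j, i), ⟨h, hadj.symm⟩, rfl⟩)
    · have hdisj : Disjoint (φ '' PT) {(k₀.castSucc, Fin.last n)} := by
        rw [Set.disjoint_singleton_right]
        rintro ⟨⟨i, j⟩, _, heq⟩
        have : j.castSucc = Fin.last n := congrArg Prod.snd heq
        exact csne j this
      rw [finsum_mem_union hdisj (Set.toFinite _) (Set.toFinite _),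
        finsum_mem_image (hφinj.injOn), finsum_mem_singleton]
      rw [hw, hk₀]
  · -- lower bound
    rintro x ⟨Λ, hI, hGen, rfl⟩
    set Λs : Set (Fin (n + 1) × Fin (n + 1)) := {e ∈ Λ | e.2 ≠ Fin.last n} with hΛs
    set Λb : Set (Fin (n + 1) × Fin (n + 1)) := {e ∈ Λ | e.2 = Fin.last n} with hΛb
    have hunion : Λ = Λs ∪ Λb := by
      ext e
      by_cases h : e.2 = Fin.last n <;> simp [hΛs, hΛb, h]
    have hdisj : Disjoint Λs Λb := by
      rw [Set.disjoint_left]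
      rintro e ⟨_, h1⟩ ⟨_, h2⟩
      exact h1 h2
    have hsplit : ∑ᶠ e ∈ Λ, c e = (∑ᶠ e ∈ Λs, c e) + ∑ᶠ e ∈ Λb, c e := by
      rw [hunion, finsum_mem_union hdisj (Set.toFinite _) (Set.toFinite _)]
    -- broken bound
    obtain ⟨k₁, hk₁⟩ := exists_broken hn hGen
    have hb1 : sInf BS ≤ c (k₁.castSucc, Fin.last n) :=
      csInf_le hBSfin.bddBelow ⟨k₁, rfl⟩
    have hb2 : c (k₁.castSucc, Fin.last n) ≤ ∑ᶠ e ∈ Λb, c e := by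
      rw [finsum_mem_eq_finite_toFinset_sum _ (Set.toFinite Λb)]
      apply Finset.single_le_sum (f := c)
      · intro e he
        rw [Set.Finite.mem_toFinset] at he
        exact (hc _ _ (hI e he.1)).le
      · rw [Set.Finite.mem_toFinset]
        exact ⟨hk₁, rfl⟩
    -- solid bound
    have hHc := solid_connected hn hI hGen
    obtain ⟨T, hTle, hTc, hTa⟩ := exists_spanning_tree hHc
    have hs1 : sInf TS ≤ W T := csInf_le hTSfin.bddBelow ⟨T, hTc, hTa, rfl⟩
    have hs2 : W T ≤ ∑ᶠ e ∈ Λs, c e := by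
      have himg : φ '' {e : Fin n × Fin n | e.1 < e.2 ∧ T.Adj e.1 e.2} ⊆ Λs := by
        rintro p ⟨⟨i, j⟩, ⟨hlt, hadj⟩, rfl⟩
        have hadj' : (solidGraph Λ).Adj i j := hTle hadj
        rcases hadj'.2 with h | h
        · exact ⟨h, csne j⟩
        · exact absurd (hI _ h) (not_lt.mpr (Fin.castSucc_lt_castSucc_iff.mpr hlt).le)
      have heq : W T = ∑ᶠ e ∈ φ '' {e : Fin n × Fin n | e.1 < e.2 ∧ T.Adj e.1 e.2}, c e := by
        rw [finsum_mem_image (hφinj.injOn)]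
      rw [heq, finsum_mem_eq_finite_toFinset_sum _ (Set.toFinite _),
        finsum_mem_eq_finite_toFinset_sum _ (Set.toFinite Λs)]
      apply Finset.sum_le_sum_of_subset_of_nonneg
      · intro e he
        rw [Set.Finite.mem_toFinset] at he ⊢
        exact himg he
      · intro e he _
        rw [Set.Finite.mem_toFinset] at he
        exact (hc _ _ (hI e he.1)).le
    rw [hsplit]
    have := add_le_add (hs1.trans hs2) (hb1.trans hb2)
    linarith
end

section
/- For n = 3 and the index set Λ = {(1,2),(2,3),(1,4)}, the Lie subalgebra generated by {Ω̃_{12}, Ω̃_{23}, E_{14}} (the smallest real subspace containing these three matrices and closed under the bracket) equals se(3). -/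
open Matrix

attribute [local instance 100] LieRing.ofAssociativeRing

lemma mulSwap {n : ℕ} {a b : Mat n} (ha : a ∈ seSet n) (hb : b ∈ seSet n) (i j : Fin n) :
    (a * b) i.castSucc j.castSucc = (b * a) j.castSucc i.castSucc := by
  obtain ⟨ha1, ha2⟩ := ha
  obtain ⟨hb1, hb2⟩ := hb
  simp only [Matrix.mul_apply, Fin.sum_univ_castSucc, hb1, ha1, mul_zero, add_zero]
  refine Finset.sum_congr rfl fun k _ => ?_
  rw [ha2 i k, hb2 k j]; ring

lemma lieClosed {n : ℕ} {a b : Mat n} (ha : a ∈ seSet n) (hb : b ∈ seSet n) :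
    ⁅a, b⁆ ∈ seSet n := by
  obtain ⟨ha1, -⟩ := id ha
  obtain ⟨hb1, -⟩ := id hb
  rw [Ring.lie_def]
  refine ⟨fun j => ?_, fun i j => ?_⟩
  · simp only [Matrix.sub_apply, Matrix.mul_apply, ha1, hb1, zero_mul,
      Finset.sum_const_zero, sub_zero]
  · simp only [Matrix.sub_apply]
    rw [mulSwap ha hb i j, mulSwap hb ha i j]; ring

def se3 : LieSubalgebra ℝ (Mat 3) where
  carrier := seSet 3
  add_mem' := by
    rintro a b ⟨ha1, ha2⟩ ⟨hb1, hb2⟩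
    refine ⟨fun j => ?_, fun i j => ?_⟩
    · simp only [Matrix.add_apply, ha1 j, hb1 j, add_zero]
    · simp only [Matrix.add_apply, ha2 i j, hb2 i j]; ring
  zero_mem' := by refine ⟨fun j => ?_, fun i j => ?_⟩ <;> simp
  smul_mem' := by
    rintro c a ⟨ha1, ha2⟩
    refine ⟨fun j => ?_, fun i j => ?_⟩
    · simp only [Matrix.smul_apply, ha1 j, smul_zero]
    · simp only [Matrix.smul_apply, ha2 i j, smul_neg]
  lie_mem' := fun {a b} ha hb => lieClosed ha hb

lemma mem_se3 (M : Mat 3) : M ∈ se3 ↔ M ∈ seSet 3 := Iff.rfl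

lemma omega_mem (i j : Fin 3) : Omega i j ∈ seSet 3 := by
  refine ⟨fun k => ?_, fun p q => ?_⟩
  · simp [Omega, Matrix.single, show i.castSucc ≠ 3 from (Fin.castSucc_lt_last i).ne,
      show j.castSucc ≠ 3 from (Fin.castSucc_lt_last j).ne]
  · simp only [Omega, Matrix.sub_apply, Matrix.single, Matrix.of_apply,
      Fin.castSucc_inj, neg_sub]
    simp only [and_comm]

lemma ecol_mem (k : Fin 3) : Ecol k ∈ seSet 3 := by
  refine ⟨fun j => ?_, fun p q => ?_⟩
  · simp [Ecol, Matrix.single, show k.castSucc ≠ 3 from (Fin.castSucc_lt_last k).ne]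
  · simp [Ecol, Matrix.single, show (3:Fin 4) ≠ q.castSucc from (Fin.castSucc_lt_last q).ne',
      show (3:Fin 4) ≠ p.castSucc from (Fin.castSucc_lt_last p).ne']

lemma br1 : Omega (0:Fin 3) 2 = ⁅Omega (0:Fin 3) 1, Omega (1:Fin 3) 2⁆ := by
  rw [Ring.lie_def]
  ext i j
  fin_cases i <;> fin_cases j <;>
    simp only [Matrix.sub_apply, Matrix.mul_apply, Fin.sum_univ_succ, Fin.sum_univ_zero] <;>
    norm_num [Omega, Matrix.single,
      Fin.ext_iff, Fin.last]

lemma br2 : Ecol (1:Fin 3) = ⁅Ecol (0:Fin 3), Omega (0:Fin 3) 1⁆ := by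
  rw [Ring.lie_def]
  ext i j
  fin_cases i <;> fin_cases j <;>
    simp only [Matrix.sub_apply, Matrix.mul_apply, Fin.sum_univ_succ, Fin.sum_univ_zero] <;>
    norm_num [Omega, Ecol,
      Matrix.single, Fin.ext_iff, Fin.last]

lemma br3 : Ecol (2:Fin 3) = ⁅Ecol (1:Fin 3), Omega (1:Fin 3) 2⁆ := by
  rw [Ring.lie_def]
  ext i j
  fin_cases i <;> fin_cases j <;>
    simp only [Matrix.sub_apply, Matrix.mul_apply, Fin.sum_univ_succ, Fin.sum_univ_zero] <;>
    norm_num [Omega, Ecol,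
      Matrix.single, Fin.ext_iff, Fin.last]

lemma decomp (M : Mat 3) (hM : M ∈ seSet 3) :
    M = M 0 1 • Omega (0:Fin 3) 1 + M 0 2 • Omega (0:Fin 3) 2 + M 1 2 • Omega (1:Fin 3) 2
      + M 0 3 • Ecol (0:Fin 3) + M 1 3 • Ecol (1:Fin 3) + M 2 3 • Ecol (2:Fin 3) := by
  obtain ⟨hr, hs⟩ := hM
  have c0 : Fin.castSucc (0:Fin 3) = (0:Fin 4) := rfl
  have c1 : Fin.castSucc (1:Fin 3) = (1:Fin 4) := rfl
  have c2 : Fin.castSucc (2:Fin 3) = (2:Fin 4) := rfl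
  have cl : Fin.last 3 = (3:Fin 4) := rfl
  have s00 : M 0 0 = 0 := by have := hs 0 0; rw [c0] at this; linarith
  have s11 : M 1 1 = 0 := by have := hs 1 1; rw [c1] at this; linarith
  have s22 : M 2 2 = 0 := by have := hs 2 2; rw [c2] at this; linarith
  have s10 : M 1 0 = - M 0 1 := by have := hs 1 0; rw [c0, c1] at this; linarith
  have s20 : M 2 0 = - M 0 2 := by have := hs 2 0; rw [c0, c2] at this; linarith
  have s21 : M 2 1 = - M 1 2 := by have := hs 2 1; rw [c1, c2] at this; linarith
  have r0 : M 3 0 = 0 := by have := hr 0; rw [cl] at this; exact this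
  have r1 : M 3 1 = 0 := by have := hr 1; rw [cl] at this; exact this
  have r2 : M 3 2 = 0 := by have := hr 2; rw [cl] at this; exact this
  have r3 : M 3 3 = 0 := by have := hr 3; rw [cl] at this; exact this
  ext i j
  fin_cases i <;> fin_cases j <;>
    simp_all [Omega, Ecol, Matrix.single, Fin.ext_iff, Fin.last,
      show ((3:Fin 4):ℕ) = 3 from rfl]


/-- For n = 3 and Λ = {(1,2),(2,3),(1,4)}: the Lie subalgebra
generated by {Ω̃₁₂, Ω̃₂₃, E₁₄} equals se(3). (Indices shifted: 1,2,3,4 ↔ 0,1,2,3.) -/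
theorem stmt14 :
    (LieSubalgebra.lieSpan ℝ (Mat 3)
        {Omega (0 : Fin 3) (1 : Fin 3), Omega (1 : Fin 3) (2 : Fin 3),
          Ecol (0 : Fin 3)} : Set (Mat 3)) = seSet 3 := by
  set S := LieSubalgebra.lieSpan ℝ (Mat 3)
    {Omega (0 : Fin 3) (1 : Fin 3), Omega (1 : Fin 3) (2 : Fin 3), Ecol (0 : Fin 3)} with hS
  apply Set.Subset.antisymm
  · intro M hM
    have hle : S ≤ se3 := by
      rw [hS, LieSubalgebra.lieSpan_le]
      intro x hx
      simp only [Set.mem_insert_iff, Set.mem_singleton_iff] at hx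
      rcases hx with rfl | rfl | rfl
      exacts [omega_mem 0 1, omega_mem 1 2, ecol_mem 0]
    exact hle hM
  · intro M hM
    have m1 : Omega (0:Fin 3) 1 ∈ S := LieSubalgebra.subset_lieSpan (by simp)
    have m2 : Omega (1:Fin 3) 2 ∈ S := LieSubalgebra.subset_lieSpan (by simp)
    have m3 : Ecol (0:Fin 3) ∈ S := LieSubalgebra.subset_lieSpan (by simp)
    have m4 : Omega (0:Fin 3) 2 ∈ S := br1 ▸ S.lie_mem m1 m2
    have m5 : Ecol (1:Fin 3) ∈ S := br2 ▸ S.lie_mem m3 m1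
    have m6 : Ecol (2:Fin 3) ∈ S := br3 ▸ S.lie_mem m5 m2
    have : M ∈ S := by
      rw [decomp M hM]
      exact S.add_mem (S.add_mem (S.add_mem (S.add_mem (S.add_mem
        (S.smul_mem _ m1) (S.smul_mem _ m4)) (S.smul_mem _ m2))
        (S.smul_mem _ m3)) (S.smul_mem _ m5)) (S.smul_mem _ m6)
    exact this
end
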